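/- arXiv:1602.05379 — 2 statements merged into one kernel-verified Lean document; each statement's English description precedes it below -/
import Mathlib

section
/- Let (A, m) be a noetherian local ring of Krull dimension n with residue field k = A/m, and suppose the associated graded ring gr_m A is isomorphic as a graded k-algebra to the polynomial ring k[X_1, ..., X_n]. If x_1, ..., x_n ∈ m are elements whose images in m/m² correspond to X_1, ..., X_n under this isomorphism, then x_1, ..., x_n form a regular sequence in A. -/
/-!
STATEMENT 6: Let (A, m) be a noetherian local ring of Krull dimension n with residue field
k = A/m, and suppose the associated graded ring gr_m A is isomorphic as a graded k-algebra
to the polynomial ring k[X_1, ..., X_n]. If x_1, ..., x_n ∈ m are elements whose images in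
m/m² correspond to X_1, ..., X_n under this isomorphism, then x_1, ..., x_n form a regular
sequence in A.
-/

open CategoryTheory Limits IsLocalRing Polynomial

universe u

set_option maxHeartbeats 1000000
set_option synthInstance.maxHeartbeats 400000

/-- The associated graded ring (tangential cone) `gr_m A = ⊕_{i≥0} mⁱ/mⁱ⁺¹`, realized as
the quotient of the Rees algebra `A[mt] ⊆ A[t]` by the ideal generated by `m`. -/
noncomputable def AssocGraded (A : Type u) [CommRing A] [IsLocalRing A] : Type u :=
  ↥(reesAlgebra (maximalIdeal A)) ⧸
    (Ideal.map (algebraMap A ↥(reesAlgebra (maximalIdeal A))) (maximalIdeal A))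

noncomputable instance (A : Type u) [CommRing A] [IsLocalRing A] :
    CommRing (AssocGraded A) :=
  inferInstanceAs (CommRing (↥(reesAlgebra (maximalIdeal A)) ⧸
    (Ideal.map (algebraMap A ↥(reesAlgebra (maximalIdeal A))) (maximalIdeal A))))

/-- The associated graded ring is an algebra over the residue field `k = A/m`. -/
noncomputable instance (A : Type u) [CommRing A] [IsLocalRing A] :
    Algebra (ResidueField A) (AssocGraded A) :=
  (Ideal.Quotient.lift (maximalIdeal A)
    ((Ideal.Quotient.mk _).comp (algebraMap A ↥(reesAlgebra (maximalIdeal A))) :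
        A →+* AssocGraded A)
    (fun a ha => by
      show (Ideal.Quotient.mk _) _ = 0
      rw [Ideal.Quotient.eq_zero_iff_mem]
      exact Ideal.mem_map_of_mem _ ha)).toAlgebra

/-- The degree-`i` homogeneous component of the associated graded ring, as a `k`-submodule:
the classes of the elements of the Rees algebra concentrated in degree `i`. -/
noncomputable def AssocGraded.piece (A : Type u) [CommRing A] [IsLocalRing A] (i : ℕ) :
    Submodule (ResidueField A) (AssocGraded A) :=
  Submodule.span (ResidueField A)
    (((Ideal.Quotient.mk _ :
        ↥(reesAlgebra (maximalIdeal A)) →+* AssocGraded A)) ''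
      {x : ↥(reesAlgebra (maximalIdeal A)) | ∃ a : A, (x : A[X]) = Polynomial.monomial i a})

/-- The class in the associated graded ring of an element `a ∈ m`, placed in degree 1
(i.e. its image in `m/m²` viewed inside `gr_m A`). -/
noncomputable def AssocGraded.deg1Class (A : Type u) [CommRing A] [IsLocalRing A]
    (a : A) (ha : a ∈ maximalIdeal A) : AssocGraded A :=
  (Ideal.Quotient.mk _ :
      ↥(reesAlgebra (maximalIdeal A)) →+* AssocGraded A)
    (⟨Polynomial.monomial 1 a, reesAlgebra.monomial_mem.mpr (by simpa using ha)⟩ :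
      ↥(reesAlgebra (maximalIdeal A)))


section Sigma

variable {A : Type u} [CommRing A] [IsLocalRing A]

local notation "𝔪" => maximalIdeal A

open Classical in
/-- The class of `a ∈ 𝔪^d` in degree `d` of the associated graded ring. -/
noncomputable def sig (d : ℕ) (a : A) : AssocGraded A :=
  if h : a ∈ 𝔪 ^ d then
    (Ideal.Quotient.mk _ : ↥(reesAlgebra 𝔪) →+* AssocGraded A)
      ⟨Polynomial.monomial d a, reesAlgebra.monomial_mem.mpr h⟩
  else 0

theorem sig_def {d : ℕ} {a : A} (h : a ∈ 𝔪 ^ d) :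
    sig d a = (Ideal.Quotient.mk _ : ↥(reesAlgebra 𝔪) →+* AssocGraded A)
      ⟨Polynomial.monomial d a, reesAlgebra.monomial_mem.mpr h⟩ := by
  unfold sig; exact dif_pos h

theorem sig_zero (d : ℕ) : sig (A := A) d 0 = 0 := by
  rw [sig_def (Ideal.zero_mem _)]
  have h0 : (⟨Polynomial.monomial d (0:A), reesAlgebra.monomial_mem.mpr (Ideal.zero_mem _)⟩ :
      ↥(reesAlgebra 𝔪)) = 0 := by ext : 1; simp
  rw [h0]
  exact map_zero _

theorem sig_add {d : ℕ} {a b : A} (ha : a ∈ 𝔪 ^ d) (hb : b ∈ 𝔪 ^ d) :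
    sig d (a + b) = sig d a + sig d b := by
  rw [sig_def ha, sig_def hb, sig_def (Ideal.add_mem _ ha hb)]
  have h0 : (⟨Polynomial.monomial d (a+b), reesAlgebra.monomial_mem.mpr (Ideal.add_mem _ ha hb)⟩ :
      ↥(reesAlgebra 𝔪)) = ⟨Polynomial.monomial d a, reesAlgebra.monomial_mem.mpr ha⟩ +
      ⟨Polynomial.monomial d b, reesAlgebra.monomial_mem.mpr hb⟩ := by ext : 1; simp
  rw [h0]
  exact map_add _ _ _

theorem sig_mul {d e : ℕ} {a b : A} (ha : a ∈ 𝔪 ^ d) (hb : b ∈ 𝔪 ^ e) :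
    sig (d + e) (a * b) = sig d a * sig e b := by
  have hab : a * b ∈ 𝔪 ^ (d + e) := by rw [pow_add]; exact Ideal.mul_mem_mul ha hb
  rw [sig_def ha, sig_def hb, sig_def hab]
  have h0 : (⟨Polynomial.monomial (d+e) (a*b), reesAlgebra.monomial_mem.mpr hab⟩ :
      ↥(reesAlgebra 𝔪)) = ⟨Polynomial.monomial d a, reesAlgebra.monomial_mem.mpr ha⟩ *
      ⟨Polynomial.monomial e b, reesAlgebra.monomial_mem.mpr hb⟩ := by
    ext : 1; simp [Polynomial.monomial_mul_monomial]
  rw [h0]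
  exact map_mul _ _ _

theorem sig_smul {d : ℕ} {a : A} (r : A) (ha : a ∈ 𝔪 ^ d) :
    (residue A r) • sig d a = sig d (r * a) := by
  rw [Algebra.smul_def]
  show (Ideal.Quotient.lift (maximalIdeal A) _ _) (residue A r) * _ = _
  rw [sig_def ha, sig_def (Ideal.mul_mem_left _ r ha)]
  show ((Ideal.Quotient.mk _ : ↥(reesAlgebra 𝔪) →+* AssocGraded A) (algebraMap A _ r)) * _ = _
  have h0 : ((algebraMap A ↥(reesAlgebra 𝔪)) r) * ⟨Polynomial.monomial d a,
      reesAlgebra.monomial_mem.mpr ha⟩ = ⟨Polynomial.monomial d (r*a),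
      reesAlgebra.monomial_mem.mpr (Ideal.mul_mem_left _ r ha)⟩ := by
    ext : 1
    show (Polynomial.C r) * (Polynomial.monomial d a) = _
    simp [Polynomial.C_mul_monomial]
  rw [← h0]
  exact (map_mul _ _ _).symm

theorem coeff_mem_of_mem_map {z : ↥(reesAlgebra 𝔪)}
    (hz : z ∈ Ideal.map (algebraMap A ↥(reesAlgebra 𝔪)) 𝔪) :
    ∀ i : ℕ, (z : A[X]).coeff i ∈ 𝔪 ^ (i + 1) := by
  rw [Ideal.map] at hz
  induction hz using Submodule.span_induction with
  | mem y hy =>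
    obtain ⟨r, hr, rfl⟩ := hy
    intro i
    show (Polynomial.C r).coeff i ∈ _
    rw [Polynomial.coeff_C]
    split
    · subst ‹i = 0›; simpa using hr
    · exact Ideal.zero_mem _
  | zero => intro i; simpa using Ideal.zero_mem _
  | add u v _ _ hu hv =>
    intro i
    show ((u : A[X]) + v).coeff i ∈ _
    rw [Polynomial.coeff_add]
    exact Ideal.add_mem _ (hu i) (hv i)
  | smul t w _ hw =>
    intro i
    show ((t : A[X]) * w).coeff i ∈ _
    rw [Polynomial.coeff_mul]
    refine Ideal.sum_mem _ ?_
    rintro ⟨p, q⟩ hpq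
    have h1 : (t : A[X]).coeff p ∈ 𝔪 ^ p := (mem_reesAlgebra_iff _ _).mp t.2 p
    have h2 : (w : A[X]).coeff q ∈ 𝔪 ^ (q + 1) := hw q
    have h3 := Ideal.mul_mem_mul h1 h2
    rw [← pow_add] at h3
    have h4 : p + (q + 1) = i + 1 := by
      have := Finset.HasAntidiagonal.mem_antidiagonal.mp hpq; omega
    rwa [h4] at h3

theorem sig_eq_zero_iff {d : ℕ} {a : A} (ha : a ∈ 𝔪 ^ d) :
    sig d a = 0 ↔ a ∈ 𝔪 ^ (d + 1) := by
  constructor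
  · intro h
    rw [sig_def ha] at h; replace h := Ideal.Quotient.eq_zero_iff_mem.mp h
    simpa using coeff_mem_of_mem_map h d
  · intro h
    rw [sig_def ha]; refine Ideal.Quotient.eq_zero_iff_mem.mpr ?_
    have h' : a ∈ 𝔪 * 𝔪 ^ d := by rw [← pow_succ']; exact h
    have key : ∃ hh : Polynomial.monomial d a ∈ reesAlgebra 𝔪,
        (⟨Polynomial.monomial d a, hh⟩ : ↥(reesAlgebra 𝔪)) ∈
          Ideal.map (algebraMap A ↥(reesAlgebra 𝔪)) 𝔪 := by
      refine Submodule.mul_induction_on h' ?_ ?_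
      · intro r hr s hs
        refine ⟨reesAlgebra.monomial_mem.mpr (Ideal.mul_mem_left _ r hs), ?_⟩
        have heq : (⟨Polynomial.monomial d (r * s), reesAlgebra.monomial_mem.mpr
            (Ideal.mul_mem_left _ r hs)⟩ : ↥(reesAlgebra 𝔪)) =
            (algebraMap A ↥(reesAlgebra 𝔪)) r *
              ⟨Polynomial.monomial d s, reesAlgebra.monomial_mem.mpr hs⟩ := by
          ext : 1
          show _ = (Polynomial.C r) * _
          simp [Polynomial.C_mul_monomial]
        rw [heq]
        exact Ideal.mul_mem_right _ _ (Ideal.mem_map_of_mem _ hr)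
      · rintro u v ⟨hu', hu2⟩ ⟨hv', hv2⟩
        refine ⟨by rw [map_add]; exact Subalgebra.add_mem _ hu' hv', ?_⟩
        have heq : (⟨Polynomial.monomial d (u + v), by rw [map_add]; exact Subalgebra.add_mem _ hu' hv'⟩ : ↥(reesAlgebra 𝔪)) =
            ⟨Polynomial.monomial d u, hu'⟩ + ⟨Polynomial.monomial d v, hv'⟩ := by
          ext : 1; simp
        rw [heq]
        exact Ideal.add_mem _ hu2 hv2
    obtain ⟨hh, hmem⟩ := key
    exact hmem

theorem sig_mem_piece {d : ℕ} {a : A} (ha : a ∈ 𝔪 ^ d) :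
    sig d a ∈ AssocGraded.piece A d := by
  rw [sig_def ha]
  exact Submodule.subset_span ⟨_, ⟨a, rfl⟩, rfl⟩

theorem exists_of_mem_piece {d : ℕ} {z : AssocGraded A} (hz : z ∈ AssocGraded.piece A d) :
    ∃ a ∈ 𝔪 ^ d, z = sig d a := by
  induction hz using Submodule.span_induction with
  | mem y hy =>
    obtain ⟨w, ⟨a, hw⟩, rfl⟩ := hy
    have ha : a ∈ 𝔪 ^ d := by
      have := (mem_reesAlgebra_iff _ _).mp w.2 d
      rwa [hw, Polynomial.coeff_monomial, if_pos rfl] at this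
    refine ⟨a, ha, ?_⟩
    rw [sig_def ha]
    congr 1
    ext : 1
    exact hw
  | zero => exact ⟨0, Ideal.zero_mem _, (sig_zero d).symm⟩
  | add u v _ _ hu hv =>
    obtain ⟨a, ha, rfl⟩ := hu
    obtain ⟨b, hb, rfl⟩ := hv
    exact ⟨a + b, Ideal.add_mem _ ha hb, (sig_add ha hb).symm⟩
  | smul c z _ hz =>
    obtain ⟨a, ha, rfl⟩ := hz
    obtain ⟨r, rfl⟩ := residue_surjective (R := A) c
    exact ⟨r * a, Ideal.mul_mem_left _ r ha, sig_smul r ha⟩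

end Sigma

section MvAux

open MvPolynomial

variable {σ : Type*} {R : Type*} [CommSemiring R]

theorem span_X_regular {s : Set σ} {j : σ} (hj : j ∉ s) {g : MvPolynomial σ R}
    (h : X j * g ∈ Ideal.span (X '' s : Set (MvPolynomial σ R))) :
    g ∈ Ideal.span (X '' s : Set (MvPolynomial σ R)) := by
  rw [mem_ideal_span_X_image] at h ⊢
  intro m hm
  have hm' : Finsupp.single j 1 + m ∈ (X j * g).support := by
    rw [MvPolynomial.mem_support_iff, MvPolynomial.coeff_X_mul]
    exact MvPolynomial.mem_support_iff.mp hm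
  obtain ⟨i, his, hi⟩ := h _ hm'
  refine ⟨i, his, ?_⟩
  have hij : i ≠ j := fun h => hj (h ▸ his)
  simpa [Finsupp.single_apply, hij.symm] using hi

theorem homogeneousComponent_X_mul [DecidableEq σ] (i : σ) (t : ℕ) (c : MvPolynomial σ R) :
    homogeneousComponent (t + 1) (X i * c) = X i * homogeneousComponent t c := by
  ext m
  rw [coeff_homogeneousComponent, MvPolynomial.coeff_X_mul', MvPolynomial.coeff_X_mul']
  by_cases hi : i ∈ m.support
  · rw [if_pos hi, if_pos hi, coeff_homogeneousComponent]
    have hle : Finsupp.single i 1 ≤ m := by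
      rw [Finsupp.single_le_iff]
      exact Nat.one_le_iff_ne_zero.mpr (Finsupp.mem_support_iff.mp hi)
    have hdeg : m.degree = (m - Finsupp.single i 1).degree + 1 := by
      have h1 : (m - Finsupp.single i 1) + Finsupp.single i 1 = m := tsub_add_cancel_of_le hle
      have hs1 : (Finsupp.single i 1 : σ →₀ ℕ).degree = 1 := by
        exact Finsupp.degree_single _ _
      have h2 : ((m - Finsupp.single i 1) + Finsupp.single i 1).degree =
          (m - Finsupp.single i 1).degree + (Finsupp.single i 1).degree := by
        simp only [Finsupp.degree_eq_weight_one]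
        exact map_add _ _ _
      rw [h1] at h2
      omega
    by_cases hd : (m - Finsupp.single i 1).degree = t
    · rw [if_pos hd, if_pos (by omega)]
    · rw [if_neg hd, if_neg (by omega)]
  · rw [if_neg hi, if_neg hi, ite_self]

theorem exists_rep_of_mem_span_X [Fintype σ] [DecidableEq σ] {s : Set σ} [DecidablePred (· ∈ s)]
    {g : MvPolynomial σ R} (h : g ∈ Ideal.span (X '' s : Set (MvPolynomial σ R))) :
    ∃ c : σ → MvPolynomial σ R, (∀ i, i ∉ s → c i = 0) ∧ g = ∑ i, X i * c i := by
  induction h using Submodule.span_induction with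
  | mem y hy =>
    obtain ⟨i, his, rfl⟩ := hy
    refine ⟨fun l => if l = i then 1 else 0, fun l hl => if_neg (fun hli => hl (by rw [hli]; exact his)), ?_⟩
    rw [Finset.sum_eq_single i]
    · simp
    · intro b _ hb; simp [hb]
    · simp
  | zero => exact ⟨0, fun _ _ => rfl, by simp⟩
  | add u v _ _ hu hv =>
    obtain ⟨c, hc0, rfl⟩ := hu
    obtain ⟨c', hc'0, rfl⟩ := hv
    exact ⟨c + c', fun i hi => by simp [hc0 i hi, hc'0 i hi],
      by simp [mul_add, Finset.sum_add_distrib]⟩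
  | smul p g _ hg =>
    obtain ⟨c, hc0, rfl⟩ := hg
    refine ⟨fun i => p * c i, fun i hi => by simp [hc0 i hi], ?_⟩
    show p * _ = _
    rw [Finset.mul_sum]
    congr 1; ext i; ring

theorem exists_homog_rep_of_mem_span_X [Fintype σ] [DecidableEq σ] {s : Set σ}
    [DecidablePred (· ∈ s)] {g : MvPolynomial σ R} {t : ℕ} (hg : g.IsHomogeneous (t + 1))
    (h : g ∈ Ideal.span (X '' s : Set (MvPolynomial σ R))) :
    ∃ c : σ → MvPolynomial σ R, (∀ i, (c i).IsHomogeneous t) ∧ (∀ i, i ∉ s → c i = 0) ∧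
      g = ∑ i, X i * c i := by
  obtain ⟨c, hc0, rfl⟩ := exists_rep_of_mem_span_X h
  refine ⟨fun i => homogeneousComponent t (c i), fun i => homogeneousComponent_isHomogeneous t _,
    fun i hi => by simp [hc0 i hi], ?_⟩
  have hgc : homogeneousComponent (t+1) (∑ i, X i * c i) = ∑ i, X i * c i := by
    rw [homogeneousComponent_of_mem ((mem_homogeneousSubmodule _ _).mpr hg), if_pos rfl]
  conv_lhs => rw [← hgc]
  rw [map_sum]
  congr 1; ext i
  rw [homogeneousComponent_X_mul]

theorem eq_zero_of_homog_zero_mem_span_X {s : Set σ} {g : MvPolynomial σ R}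
    (hg : g.IsHomogeneous 0) (h : g ∈ Ideal.span (X '' s : Set (MvPolynomial σ R))) :
    g = 0 := by
  rw [mem_ideal_span_X_image] at h
  rw [MvPolynomial.eq_zero_iff]
  intro d
  by_contra hd
  obtain ⟨i, _, hi⟩ := h d (MvPolynomial.mem_support_iff.mpr hd)
  have hw : d.degree = 0 := by
    rw [Finsupp.degree_eq_weight_one]
    exact hg hd
  rw [Finsupp.degree_eq_zero_iff] at hw
  subst hw
  simp at hi

end MvAux

section Main

open MvPolynomial

variable {A : Type u} [CommRing A] [IsLocalRing A]

local notation "𝔪" => maximalIdeal A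

variable {n : ℕ} (e : MvPolynomial (Fin n) (ResidueField A) ≃ₐ[ResidueField A] AssocGraded A)
  (he : ∀ i : ℕ, Submodule.map e.toLinearMap
      (MvPolynomial.homogeneousSubmodule (Fin n) (ResidueField A) i) = AssocGraded.piece A i)
  (x : Fin n → A) (hx : ∀ i, x i ∈ maximalIdeal A)

section WithE

include he

theorem lift_homog {t : ℕ} {f : MvPolynomial (Fin n) (ResidueField A)}
    (hf : f.IsHomogeneous t) : ∃ a ∈ 𝔪 ^ t, e f = sig t a := by
  have : e f ∈ AssocGraded.piece A t := by
    rw [← he t]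
    exact Submodule.mem_map_of_mem ((mem_homogeneousSubmodule _ _).mpr hf)
  exact exists_of_mem_piece this

theorem symm_sig_homog {t : ℕ} {a : A} (ha : a ∈ 𝔪 ^ t) :
    (e.symm (sig t a)).IsHomogeneous t := by
  have h1 : sig t a ∈ Submodule.map e.toLinearMap
      (MvPolynomial.homogeneousSubmodule (Fin n) (ResidueField A) t) := by
    rw [he t]; exact sig_mem_piece ha
  obtain ⟨f, hf, hef⟩ := h1
  have : e.symm (sig t a) = f := by
    rw [← hef]; exact e.symm_apply_apply f
  rw [this]
  exact (mem_homogeneousSubmodule _ _).mp hf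

end WithE

variable (hcorr : ∀ i : Fin n, e (MvPolynomial.X i) = AssocGraded.deg1Class A (x i) (hx i))

theorem sig_finsum {d : ℕ} {ι : Type*} (s : Finset ι) (f : ι → A)
    (hf : ∀ i ∈ s, f i ∈ 𝔪 ^ d) :
    sig d (∑ i ∈ s, f i) = ∑ i ∈ s, sig d (f i) := by
  classical
  induction s using Finset.induction with
  | empty => simpa using sig_zero d
  | insert _ _ hns ih =>
    rename_i b s'
    rw [Finset.sum_insert hns, Finset.sum_insert hns,
      sig_add (hf b (Finset.mem_insert_self _ _))
        (Ideal.sum_mem _ fun i hi => hf i (Finset.mem_insert_of_mem hi)),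
      ih fun i hi => hf i (Finset.mem_insert_of_mem hi)]

include hx hcorr

theorem sig_one_x (i : Fin n) : sig 1 (x i) = e (X i) := by
  rw [hcorr i, AssocGraded.deg1Class, sig_def ((pow_one 𝔪).symm ▸ hx i)]

theorem sig_xmul {t : ℕ} {a : A} (ha : a ∈ 𝔪 ^ t) (i : Fin n) :
    sig (t + 1) (x i * a) = e (X i) * sig t a := by
  have h1 : x i ∈ 𝔪 ^ 1 := (pow_one 𝔪).symm ▸ hx i
  have := sig_mul h1 ha
  rw [Nat.add_comm 1 t] at this
  rw [this, sig_one_x e x hx hcorr i]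


omit hcorr in
theorem sum_xmul_mem {t : ℕ} {a : Fin n → A} (ha : ∀ i, a i ∈ 𝔪 ^ t) :
    ∑ i, x i * a i ∈ 𝔪 ^ (t + 1) := by
  refine Ideal.sum_mem _ fun i _ => ?_
  rw [pow_succ']
  exact Ideal.mul_mem_mul (hx i) (ha i)

theorem sig_sum_xmul {t : ℕ} {a : Fin n → A} (ha : ∀ i, a i ∈ 𝔪 ^ t) :
    sig (t + 1) (∑ i, x i * a i) = e (∑ i, X i * e.symm (sig t (a i))) := by
  rw [sig_finsum _ _ (fun i _ => by
    rw [pow_succ']; exact Ideal.mul_mem_mul (hx i) (ha i)), map_sum]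
  refine Finset.sum_congr rfl fun i _ => ?_
  rw [sig_xmul e x hx hcorr (ha i) i, map_mul, e.apply_symm_apply]

omit hcorr in
theorem xmul_mem_pow {t : ℕ} {b : A} (hb : b ∈ 𝔪 ^ (t - 1)) (i : Fin n) :
    x i * b ∈ 𝔪 ^ t := by
  cases t with
  | zero => simp
  | succ s =>
    rw [pow_succ']
    exact Ideal.mul_mem_mul (hx i) (by simpa using hb)

omit hx hcorr in
theorem mem_span_x_iff (j : ℕ) (f : A) :
    f ∈ Ideal.span (x '' {l : Fin n | ↑l < j}) ↔
      ∃ a : Fin n → A, (∀ i : Fin n, ¬(↑i < j) → a i = 0) ∧ f = ∑ i, x i * a i := by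
  classical
  constructor
  · intro h
    induction h using Submodule.span_induction with
    | mem y hy =>
      obtain ⟨l, hl, rfl⟩ := hy
      refine ⟨fun i => if i = l then 1 else 0, fun i hi => if_neg (fun hil => hi (by
        rw [hil]; exact hl)), ?_⟩
      rw [Finset.sum_eq_single l]
      · simp
      · intro b _ hb; simp [hb]
      · simp
    | zero => exact ⟨0, fun _ _ => rfl, by simp⟩
    | add u v _ _ hu hv =>
      obtain ⟨c, hc0, rfl⟩ := hu
      obtain ⟨c', hc'0, rfl⟩ := hv
      exact ⟨c + c', fun i hi => by simp [hc0 i hi, hc'0 i hi],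
        by simp [mul_add, Finset.sum_add_distrib]⟩
    | smul p g _ hg =>
      obtain ⟨c, hc0, rfl⟩ := hg
      refine ⟨fun i => p * c i, fun i hi => by simp [hc0 i hi], ?_⟩
      show p * _ = _
      rw [Finset.mul_sum]
      refine Finset.sum_congr rfl fun i _ => by ring
  · rintro ⟨a, ha0, rfl⟩
    refine Ideal.sum_mem _ fun i _ => ?_
    by_cases hi : (i : ℕ) < j
    · exact Ideal.mul_mem_right _ _ (Ideal.subset_span ⟨i, hi, rfl⟩)
    · rw [ha0 i hi, mul_zero]; exact Ideal.zero_mem _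

include e he in
theorem lift_step (t s : ℕ) (c : A) (hc : c ∈ 𝔪 ^ t)
    (hspan : e.symm (sig t c) ∈
      Ideal.span (X '' {i : Fin n | ↑i < s} : Set (MvPolynomial (Fin n) (ResidueField A)))) :
    ∃ b : Fin n → A, (∀ i, b i ∈ 𝔪 ^ (t - 1)) ∧ (∀ i : Fin n, ¬(↑i < s) → b i = 0) ∧
      c - ∑ i, x i * b i ∈ 𝔪 ^ (t + 1) := by
  classical
  cases t with
  | zero =>
    have hg0 : e.symm (sig 0 c) = 0 :=
      eq_zero_of_homog_zero_mem_span_X (symm_sig_homog e he hc) hspan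
    have : sig 0 c = 0 := by
      have := congrArg e hg0
      rwa [e.apply_symm_apply, map_zero] at this
    refine ⟨0, fun i => by simp, fun i _ => rfl, ?_⟩
    simpa using (sig_eq_zero_iff hc).mp this
  | succ t' =>
    obtain ⟨h, hhom, hzero, hrep⟩ :=
      exists_homog_rep_of_mem_span_X (symm_sig_homog e he hc) hspan
    choose b hb hb2 using fun i => lift_homog e he (hhom i)
    refine ⟨fun i => if (i : ℕ) < s then b i else 0,
      fun i => by
        show (if (i : ℕ) < s then b i else 0) ∈ 𝔪 ^ (t' + 1 - 1)
        rw [Nat.add_sub_cancel]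
        split <;> simp [hb], fun i hi => if_neg hi, ?_⟩
    set b' : Fin n → A := fun i => if (i : ℕ) < s then b i else 0 with hb'
    have hb'mem : ∀ i, b' i ∈ 𝔪 ^ t' := fun i => by
      rw [hb']; dsimp only; split <;> simp [hb]
    have hsub : c - ∑ i, x i * b' i ∈ 𝔪 ^ (t' + 1) := by
      have h1 : ∑ i, x i * b' i ∈ 𝔪 ^ (t' + 1) := sum_xmul_mem x hx hb'mem
      exact Ideal.sub_mem _ hc h1
    have hsig : sig (t' + 1) (c - ∑ i, x i * b' i) = 0 := by
      have hsum : sig (t' + 1) (∑ i, x i * b' i) =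
          e (∑ i, X i * e.symm (sig t' (b' i))) := sig_sum_xmul e x hx hcorr hb'mem
      have heq : ∀ i, X i * e.symm (sig t' (b' i)) = X i * h i := by
        intro i
        rw [hb']; dsimp only
        split
        · rw [← hb2 i, e.symm_apply_apply]
        · simp [hzero i (by assumption), sig_zero]
      rw [funext heq] at hsum
      have hc' : sig (t' + 1) c = e (∑ i, X i * h i) := by
        rw [← hrep]
        have : e (e.symm (sig (t'+1) c)) = sig (t'+1) c := e.apply_symm_apply _
        rw [this]
      have : sig (t'+1) (c - ∑ i, x i * b' i) = sig (t'+1) c - sig (t'+1) (∑ i, x i * b' i) := by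
        have := sig_add hsub (sum_xmul_mem x hx hb'mem)
        rw [sub_add_cancel] at this
        rw [this]; ring
      rw [this, hc', hsum, sub_self]
    simpa using (sig_eq_zero_iff hsub).mp hsig

include e he hx hcorr in
theorem step_up : ∀ (j : ℕ), j ≤ n → ∀ (t : ℕ) (a : Fin n → A),
    (∀ i, a i ∈ 𝔪 ^ t) → (∀ i : Fin n, ¬(↑i < j) → a i = 0) →
    (∑ i, x i * a i ∈ 𝔪 ^ (t + 2)) →
    ∃ a' : Fin n → A, (∀ i, a' i ∈ 𝔪 ^ (t + 1)) ∧ (∀ i : Fin n, ¬(↑i < j) → a' i = 0) ∧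
      ∑ i, x i * a i = ∑ i, x i * a' i := by
  classical
  intro j
  induction j with
  | zero =>
    intro _ t a ha hsupp _
    refine ⟨0, by simp, fun _ _ => rfl, ?_⟩
    refine Finset.sum_congr rfl fun i _ => ?_
    rw [hsupp i (by omega)]
    simp
  | succ j ih =>
    intro hj t a ha hsupp hsum
    set jj : Fin n := ⟨j, by omega⟩ with hjj
    have hjjval : (jj : ℕ) = j := rfl
    set g : Fin n → MvPolynomial (Fin n) (ResidueField A) :=
      fun i => e.symm (sig t (a i)) with hgdef
    have hsumzero : (∑ i, X i * g i) = 0 := by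
      have h1 : sig (t + 1) (∑ i, x i * a i) = e (∑ i, X i * g i) :=
        sig_sum_xmul e x hx hcorr ha
      have h2 : sig (t + 1) (∑ i, x i * a i) = 0 :=
        (sig_eq_zero_iff (sum_xmul_mem x hx ha)).mpr (by simpa using hsum)
      have h3 : e (∑ i, X i * g i) = e 0 := by rw [← h1, h2, map_zero]
      exact e.injective h3
    have hzero_of : ∀ i : Fin n, ¬((i : ℕ) < j + 1) → g i = 0 := by
      intro i hi
      rw [hgdef]; dsimp only
      rw [hsupp i hi, sig_zero, map_zero]
    have hXjj : X jj * g jj ∈ Ideal.span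
        (X '' {l : Fin n | ↑l < j} : Set (MvPolynomial (Fin n) (ResidueField A))) := by
      have hsplit : X jj * g jj = -∑ i ∈ Finset.univ.erase jj, X i * g i := by
        have := Finset.add_sum_erase Finset.univ (fun i => X i * g i)
          (Finset.mem_univ jj)
        rw [hsumzero] at this
        linear_combination (norm := ring_nf) this
      rw [hsplit]
      refine neg_mem (Ideal.sum_mem _ fun i hi => ?_)
      by_cases hlt : (i : ℕ) < j
      · exact Ideal.mul_mem_right _ _ (Ideal.subset_span ⟨i, hlt, rfl⟩)
      · have hine : i ≠ jj := (Finset.mem_erase.mp hi).1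
        have hge : ¬((i : ℕ) < j + 1) := by
          intro hcon
          exact hine (Fin.ext (by omega : (i : ℕ) = j))
        rw [hzero_of i hge, mul_zero]
        exact Ideal.zero_mem _
    have hgjj : g jj ∈ Ideal.span
        (X '' {l : Fin n | ↑l < j} : Set (MvPolynomial (Fin n) (ResidueField A))) :=
      span_X_regular (by simp [hjjval]) hXjj
    obtain ⟨b, hbmem, hbsupp, hr⟩ := lift_step e he x hx hcorr t j (a jj) (ha jj) hgjj
    set r : A := a jj - ∑ i, x i * b i with hrdef
    have hbjj : b jj = 0 := hbsupp jj (by rw [hjjval]; omega)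
    set a'' : Fin n → A := fun i => if i = jj then 0 else a i + x jj * b i with ha''def
    have ha''mem : ∀ i, a'' i ∈ 𝔪 ^ t := by
      intro i
      rw [ha''def]; dsimp only
      split
      · exact Ideal.zero_mem _
      · exact Ideal.add_mem _ (ha i) (xmul_mem_pow x hx (hbmem i) jj)
    have ha''supp : ∀ i : Fin n, ¬((i : ℕ) < j) → a'' i = 0 := by
      intro i hi
      rw [ha''def]; dsimp only
      by_cases hij : i = jj
      · rw [if_pos hij]
      · rw [if_neg hij]
        have hge : ¬((i : ℕ) < j + 1) := by
          intro hcon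
          exact hij (Fin.ext (by omega : (i : ℕ) = j))
        rw [hsupp i hge, hbsupp i hi, mul_zero, add_zero]
    have hterm : ∀ i : Fin n, x i * a'' i = x i * a i + x jj * (x i * b i) -
        (if i = jj then x jj * a jj + x jj * (x jj * b jj) else 0) := by
      intro i
      rw [ha''def]; dsimp only
      by_cases hij : i = jj
      · subst hij; rw [if_pos rfl, if_pos rfl]; ring
      · rw [if_neg hij, if_neg hij]; ring
    have hsum'' : ∑ i, x i * a'' i = (∑ i, x i * a i) - x jj * r := by
      rw [Finset.sum_congr rfl fun i _ => hterm i, Finset.sum_sub_distrib,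
        Finset.sum_add_distrib, ← Finset.mul_sum,
        Finset.sum_ite_eq' Finset.univ jj
          (fun i => x jj * a jj + x jj * (x jj * b jj)),
        if_pos (Finset.mem_univ jj), hbjj, hrdef]
      ring
    have ha''sum : ∑ i, x i * a'' i ∈ 𝔪 ^ (t + 2) := by
      rw [hsum'']
      refine Ideal.sub_mem _ hsum ?_
      rw [pow_succ']
      exact Ideal.mul_mem_mul (hx jj) hr
    obtain ⟨a3, ha3mem, ha3supp, ha3sum⟩ := ih (by omega) t a'' ha''mem ha''supp ha''sum
    have ha3jj : a3 jj = 0 := ha3supp jj (by rw [hjjval]; omega)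
    refine ⟨fun i => if i = jj then r else a3 i, ?_, ?_, ?_⟩
    · intro i
      dsimp only
      split
      · exact hr
      · exact ha3mem i
    · intro i hi
      dsimp only
      have hij : i ≠ jj := by
        intro hcon
        rw [hcon, hjjval] at hi
        omega
      rw [if_neg hij]
      exact ha3supp i (by omega)
    · have hterm2 : ∀ i : Fin n, x i * (if i = jj then r else a3 i) =
          (if i = jj then x jj * r - x jj * a3 jj else 0) + x i * a3 i := by
        intro i
        by_cases hij : i = jj
        · subst hij; rw [if_pos rfl, if_pos rfl]; ring
        · rw [if_neg hij, if_neg hij]; ring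
      rw [Finset.sum_congr rfl fun i _ => hterm2 i, Finset.sum_add_distrib,
        Finset.sum_ite_eq' Finset.univ jj (fun _ => x jj * r - x jj * a3 jj),
        if_pos (Finset.mem_univ jj), ha3jj, ← ha3sum, hsum'']
      ring

include e he hx hcorr in
theorem span_rep : ∀ (j : ℕ), j ≤ n → ∀ (d : ℕ) (f : A), f ∈ 𝔪 ^ d →
    f ∈ Ideal.span (x '' {l : Fin n | ↑l < j}) →
    ∃ a : Fin n → A, (∀ i, a i ∈ 𝔪 ^ (d - 1)) ∧ (∀ i : Fin n, ¬(↑i < j) → a i = 0) ∧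
      f = ∑ i, x i * a i := by
  intro j hj d
  induction d with
  | zero =>
    intro f _ hfspan
    obtain ⟨a, hasupp, rfl⟩ := (mem_span_x_iff x j f).mp hfspan
    exact ⟨a, fun i => by simp, hasupp, rfl⟩
  | succ d ihd =>
    intro f hf hfspan
    have hf' : f ∈ 𝔪 ^ d := Ideal.pow_le_pow_right (Nat.le_succ d) hf
    obtain ⟨a, hamem, hasupp, rfl⟩ := ihd f hf' hfspan
    cases d with
    | zero => exact ⟨a, fun i => by simp, hasupp, rfl⟩
    | succ t =>
      obtain ⟨a', h1, h2, h3⟩ := step_up e he x hx hcorr j hj t a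
        (fun i => by simpa using hamem i) hasupp (by simpa using hf)
      exact ⟨a', fun i => by simpa using h1 i, h2, h3⟩

omit hx hcorr in
theorem krull_inter [IsNoetherianRing A] {I : Ideal A} (hI : I ≤ 𝔪) {a : A}
    (h : ∀ d : ℕ, a ∈ I + 𝔪 ^ d) : a ∈ I := by
  by_contra ha
  have hInetop : I ≠ ⊤ := by
    intro htop
    exact Ideal.IsMaximal.ne_top (maximalIdeal.isMaximal A) (top_le_iff.mp (htop ▸ hI))
  letI : Nontrivial (A ⧸ I) := Ideal.Quotient.nontrivial_iff.mpr hInetop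
  letI : IsLocalRing (A ⧸ I) :=
    IsLocalRing.of_surjective' (Ideal.Quotient.mk I) Ideal.Quotient.mk_surjective
  set J := Ideal.map (Ideal.Quotient.mk I) 𝔪 with hJdef
  have hcomap := Ideal.comap_map_of_surjective (Ideal.Quotient.mk I)
    Ideal.Quotient.mk_surjective 𝔪
  have hJ : J ≠ ⊤ := by
    intro htop
    rw [hJdef] at htop
    rw [htop, Ideal.comap_top] at hcomap
    have hle : (⊤ : Ideal A) ≤ 𝔪 := by
      rw [hcomap]
      refine sup_le le_rfl ?_
      rw [← RingHom.ker_eq_comap_bot, Ideal.mk_ker]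
      exact hI
    exact Ideal.IsMaximal.ne_top (maximalIdeal.isMaximal A) (top_le_iff.mp hle)
  have hbot := Ideal.iInf_pow_eq_bot_of_isLocalRing J hJ
  have hmem : Ideal.Quotient.mk I a ∈ ⨅ d : ℕ, J ^ d := by
    rw [Submodule.mem_iInf]
    intro d
    obtain ⟨u, hu, v, hv, huv⟩ := Submodule.mem_sup.mp (h d)
    have : Ideal.Quotient.mk I a = Ideal.Quotient.mk I v := by
      rw [← huv, map_add, Ideal.Quotient.eq_zero_iff_mem.mpr hu, zero_add]
    rw [this, hJdef, ← Ideal.map_pow]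
    exact Ideal.mem_map_of_mem _ hv
  rw [hbot] at hmem
  exact ha (Ideal.Quotient.eq_zero_iff_mem.mp hmem)

include e he hx hcorr in
theorem core_step [IsNoetherianRing A] (j : Fin n) (a : A)
    (h : x j * a ∈ Ideal.span (x '' {l : Fin n | ↑l < ↑j})) :
    a ∈ Ideal.span (x '' {l : Fin n | ↑l < ↑j}) := by
  have hIle : Ideal.span (x '' {l : Fin n | ↑l < ↑j}) ≤ 𝔪 := by
    rw [Ideal.span_le]
    rintro _ ⟨l, _, rfl⟩
    exact hx l
  refine krull_inter hIle ?_
  intro d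
  induction d with
  | zero =>
    rw [pow_zero, Ideal.one_eq_top]
    exact Submodule.mem_sup_right Submodule.mem_top
  | succ d ihd =>
    obtain ⟨b, hb, c, hc, hbc⟩ := Submodule.mem_sup.mp ihd
    have hxc : x j * c ∈ Ideal.span (x '' {l : Fin n | ↑l < ↑j}) := by
      have h1 : x j * c = x j * a - x j * b := by rw [← hbc]; ring
      rw [h1]
      exact Ideal.sub_mem _ h (Ideal.mul_mem_left _ _ hb)
    have hxcm : x j * c ∈ 𝔪 ^ (d + 1) := by
      rw [pow_succ']
      exact Ideal.mul_mem_mul (hx j) hc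
    obtain ⟨av, havmem, havsupp, hrep⟩ := span_rep e he x hx hcorr (↑j) j.isLt.le (d + 1)
      (x j * c) hxcm hxc
    have havmem' : ∀ i, av i ∈ 𝔪 ^ d := fun i => by simpa using havmem i
    have hgzero : ∀ i : Fin n, ¬((i : ℕ) < ↑j) → e.symm (sig d (av i)) = 0 := by
      intro i hi
      rw [havsupp i hi, sig_zero, map_zero]
    have hkey : X j * e.symm (sig d c) ∈ Ideal.span
        (X '' {l : Fin n | ↑l < ↑j} : Set (MvPolynomial (Fin n) (ResidueField A))) := by
      have h1 : sig (d + 1) (x j * c) = e (X j) * sig d c := sig_xmul e x hx hcorr hc j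
      have h2 : sig (d + 1) (∑ i, x i * av i) =
          e (∑ i, X i * e.symm (sig d (av i))) := sig_sum_xmul e x hx hcorr havmem'
      have h3 : e (X j * e.symm (sig d c)) = e (∑ i, X i * e.symm (sig d (av i))) := by
        rw [map_mul, e.apply_symm_apply, ← h1, hrep, h2]
      have h4 := e.injective h3
      rw [h4]
      refine Ideal.sum_mem _ fun i _ => ?_
      by_cases hlt : (i : ℕ) < ↑j
      · exact Ideal.mul_mem_right _ _ (Ideal.subset_span ⟨i, hlt, rfl⟩)
      · rw [hgzero i hlt, mul_zero]
        exact Ideal.zero_mem _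
    have hG : e.symm (sig d c) ∈ Ideal.span
        (X '' {l : Fin n | ↑l < ↑j} : Set (MvPolynomial (Fin n) (ResidueField A))) :=
      span_X_regular (by simp) hkey
    obtain ⟨b', hb'mem, hb'supp, hb'sub⟩ := lift_step e he x hx hcorr d (↑j) c hc hG
    have hsumI : ∑ i, x i * b' i ∈ Ideal.span (x '' {l : Fin n | ↑l < ↑j}) := by
      refine Ideal.sum_mem _ fun i _ => ?_
      by_cases hlt : (i : ℕ) < ↑j
      · exact Ideal.mul_mem_right _ _ (Ideal.subset_span ⟨i, hlt, rfl⟩)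
      · rw [hb'supp i hlt, mul_zero]
        exact Ideal.zero_mem _
    refine Submodule.mem_sup.mpr ⟨b + ∑ i, x i * b' i,
      Ideal.add_mem _ hb hsumI, c - ∑ i, x i * b' i, hb'sub, by rw [← hbc]; ring⟩

end Main

theorem isRegular_of_assocGraded_polynomial
    (A : Type u) [CommRing A] [IsNoetherianRing A] [IsLocalRing A]
    (n : ℕ) (hdim : ringKrullDim A = n)
    (e : MvPolynomial (Fin n) (ResidueField A) ≃ₐ[ResidueField A] AssocGraded A)
    (he : ∀ i : ℕ, Submodule.map e.toLinearMap
      (MvPolynomial.homogeneousSubmodule (Fin n) (ResidueField A) i) = AssocGraded.piece A i)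
    (x : Fin n → A) (hx : ∀ i, x i ∈ maximalIdeal A)
    (hcorr : ∀ i : Fin n, e (MvPolynomial.X i) = AssocGraded.deg1Class A (x i) (hx i)) :
    RingTheory.Sequence.IsRegular A (List.ofFn x) := by
  classical
  have hsmul_top : ∀ J : Ideal A, (J • ⊤ : Submodule A A) = J := fun J => by
    rw [smul_eq_mul, Ideal.mul_top]
  have htake : ∀ (i : ℕ) (r : A), r ∈ List.take i (List.ofFn x) ↔
      ∃ l : Fin n, ↑l < i ∧ x l = r := by
    intro j r
    rw [List.mem_iff_getElem]
    constructor
    · rintro ⟨i, hi, rfl⟩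
      have hi' := hi
      rw [List.length_take, List.length_ofFn] at hi'
      rw [List.getElem_take, List.getElem_ofFn]
      exact ⟨⟨i, by omega⟩, by simp only [Fin.val_mk]; omega, rfl⟩
    · rintro ⟨l, hl, rfl⟩
      refine ⟨l, by simp [List.length_take]; omega, ?_⟩
      rw [List.getElem_take, List.getElem_ofFn]
  have hideal : ∀ i : ℕ, Ideal.ofList (List.take i (List.ofFn x)) =
      Ideal.span (x '' {l : Fin n | ↑l < i}) := by
    intro i
    show Ideal.span _ = _
    congr 1
    ext r
    rw [Set.mem_setOf_eq, htake i r]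
    constructor
    · rintro ⟨l, hl, rfl⟩; exact ⟨l, hl, rfl⟩
    · rintro ⟨l, hl, rfl⟩; exact ⟨l, hl, rfl⟩
  constructor
  · constructor
    intro i hi
    have hin : i < n := by simpa using hi
    set jj : Fin n := ⟨i, hin⟩ with hjjdef
    have hget : (List.ofFn x)[i] = x jj := by
      rw [List.getElem_ofFn]
    rw [hget]
    intro z w hzw
    obtain ⟨b, rfl⟩ := Submodule.Quotient.mk_surjective _ z
    obtain ⟨c, rfl⟩ := Submodule.Quotient.mk_surjective _ w
    dsimp only at hzw
    rw [← Submodule.Quotient.mk_smul, ← Submodule.Quotient.mk_smul] at hzw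
    have hsub : x jj • b - x jj • c ∈
        (Ideal.ofList (List.take i (List.ofFn x)) • ⊤ : Submodule A A) :=
      (Submodule.Quotient.eq _).mp hzw
    rw [hsmul_top, hideal i] at hsub
    have hmul : x jj * (b - c) ∈ Ideal.span (x '' {l : Fin n | ↑l < i}) := by
      have heq : x jj * (b - c) = x jj • b - x jj • c := by
        simp only [smul_eq_mul]; ring
      rw [heq]
      exact hsub
    have hcore := core_step e he x hx hcorr jj (b - c)
      (by exact hmul)
    rw [Submodule.Quotient.eq, hsmul_top, hideal i]
    exact hcore
  · intro htop
    have h1 : (Ideal.ofList (List.ofFn x) • ⊤ : Submodule A A) =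
        Ideal.ofList (List.ofFn x) := hsmul_top _
    have hle : Ideal.ofList (List.ofFn x) ≤ maximalIdeal A := by
      refine Ideal.span_le.mpr ?_
      intro r hr
      obtain ⟨l, rfl⟩ := List.mem_ofFn.mp hr
      exact hx l
    have hone : (1 : A) ∈ maximalIdeal A := by
      refine hle ?_
      rw [← h1, ← htop]
      exact Submodule.mem_top
    exact Ideal.IsMaximal.ne_top (maximalIdeal.isMaximal A) ((Ideal.eq_top_iff_one _).mpr hone)
end

section
/- Let (A, m) be a noetherian local ring of finite global dimension, and let p be a prime ideal of A. Then the localization A_p also has finite global dimension. -/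
/-!
STATEMENT 9: Let (A, m) be a noetherian local ring of finite global dimension, and let p
be a prime ideal of A. Then the localization A_p also has finite global dimension.
-/

open CategoryTheory Limits IsLocalRing

universe u

/-- The global dimension of a commutative ring: the supremum (in `ℕ∞`) over all pairs of
modules `M, N` of the integers `p` with `Ext_A^p(M, N) ≠ 0`. -/
noncomputable def gldh (A : Type u) [CommRing A] : ℕ∞ :=
  sSup {n : ℕ∞ | ∃ (p : ℕ) (M N : ModuleCat.{u} A),
    n = (p : ℕ∞) ∧ ¬ IsZero (((Ext A (ModuleCat.{u} A) p).obj (Opposite.op M)).obj N)}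

section Generalities

variable {R S : Type u} [CommRing R] [CommRing S] (f : R →+* S)

instance gldhAux_extendScalars_additive : (ModuleCat.extendScalars.{u,u,u} f).Additive :=
  (ModuleCat.extendRestrictScalarsAdj.{u,u,u} f).left_adjoint_additive

instance gldhAux_restrictScalars_preservesEpi :
    (ModuleCat.restrictScalars.{u,u,u} f).PreservesEpimorphisms where
  preserves g hg := by
    rw [ModuleCat.epi_iff_surjective] at hg ⊢
    exact hg

lemma gldhAux_extendScalars_map_exact
    (hflat : Module.Flat R ((ModuleCat.restrictScalars f).obj (ModuleCat.of S S)))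
    (C : ShortComplex (ModuleCat R)) (hC : C.Exact) :
    (C.map (ModuleCat.extendScalars.{u,u,u} f)).Exact := by
  rw [ShortComplex.ShortExact.moduleCat_exact_iff_function_exact] at hC ⊢
  exact @Module.Flat.lTensor_exact R ((ModuleCat.restrictScalars f).obj (ModuleCat.of S S)) _ _ _
    hflat _ _ _ _ _ _ _ _ _ _ _ hC

end Generalities

instance gldhAux_restrictScalars_additive {R S : Type u} [CommRing R] [CommRing S] (f : R →+* S) :
    (ModuleCat.restrictScalars.{u,u,u} f).Additive where
  map_add := ModuleCat.hom_ext (LinearMap.ext fun _ => rfl)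


section Loc

open scoped ChangeOfRings

variable {R : Type u} [CommRing R] (Sub : Submonoid R)

local notation "S" => Localization Sub
local notation "floc" => algebraMap R (Localization Sub)

lemma gldhAux_flat_restrict :
    Module.Flat R ((ModuleCat.restrictScalars (algebraMap R S)).obj (ModuleCat.of S S)) :=
  Module.Flat.of_linearEquiv (R := R) (M := S)
    { toFun := fun x => x
      invFun := fun x => x
      left_inv := fun _ => rfl
      right_inv := fun _ => rfl
      map_add' := fun _ _ => rfl
      map_smul' := fun r x => (Algebra.smul_def (A := S) r x).symm }

instance : (ModuleCat.extendScalars.{u,u,u} floc).PreservesHomology :=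
  Functor.preservesHomology_of_map_exact _
    (gldhAux_extendScalars_map_exact _ (gldhAux_flat_restrict Sub))

noncomputable def gldhAux.oneS :
    (ModuleCat.restrictScalars floc).obj (ModuleCat.of S S) := (1 : S)

noncomputable def gldhAux.tm (Y : ModuleCat.{u} S)
    (s : (ModuleCat.restrictScalars floc).obj (ModuleCat.of S S))
    (y : (ModuleCat.restrictScalars floc).obj Y) :
    (ModuleCat.extendScalars floc).obj ((ModuleCat.restrictScalars floc).obj Y) :=
  s ⊗ₜ[R,floc] y

namespace gldhAux

lemma tm_smulS (Y : ModuleCat.{u} S) (s s' : S)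
    (y : (ModuleCat.restrictScalars floc).obj Y) :
    s • tm Sub Y s' y = tm Sub Y (s * s') y := rfl

lemma tm_cross (Y : ModuleCat.{u} S) (r : R)
    (s : (ModuleCat.restrictScalars floc).obj (ModuleCat.of S S))
    (y : (ModuleCat.restrictScalars floc).obj Y) :
    tm Sub Y (r • s) y = tm Sub Y s (r • y) :=
  Quotient.sound' <| AddConGen.Rel.of _ _ <| TensorProduct.Eqv.of_smul _ _ _

lemma smul_oneS (r : R) : r • oneS Sub = ((algebraMap R S) r : S) := by
  show ((algebraMap R S) r * (1 : S) : S) = _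
  rw [mul_one]

lemma smul_carrierY (Y : ModuleCat.{u} S) (r : R)
    (y : (ModuleCat.restrictScalars floc).obj Y) :
    r • y = ((algebraMap R S) r • (y : Y) : Y) := rfl

lemma tm_add (Y : ModuleCat.{u} S) (s : S)
    (y y' : (ModuleCat.restrictScalars floc).obj Y) :
    tm Sub Y s (y + y') = tm Sub Y s y + tm Sub Y s y' := TensorProduct.tmul_add _ _ _

lemma key_tmul (Y : ModuleCat.{u} S) (s : S)
    (y : (ModuleCat.restrictScalars floc).obj Y) :
    tm Sub Y s y = tm Sub Y (oneS Sub) (s • y) := by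
  obtain ⟨⟨a, t⟩, hat⟩ := IsLocalization.surj Sub s
  simp only at hat
  have hu : IsUnit ((algebraMap R S) (t : R)) := IsLocalization.map_units S t
  have h1 : ∀ (r : R) (y' : (ModuleCat.restrictScalars floc).obj Y),
      tm Sub Y ((algebraMap R S) r) y' = tm Sub Y (oneS Sub) ((algebraMap R S) r • (y' : Y)) := by
    intro r y'
    rw [show tm Sub Y ((algebraMap R S) r) y' = tm Sub Y (r • oneS Sub) y' from by
      rw [smul_oneS]]
    rw [tm_cross, smul_carrierY]
  have hz : ((algebraMap R S) (t : R)) • (tm Sub Y s y - tm Sub Y (oneS Sub) (s • y)) = 0 := by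
    rw [smul_sub, tm_smulS]
    rw [show ((algebraMap R S) (t : R)) • tm Sub Y (oneS Sub) (s • y)
        = tm Sub Y ((algebraMap R S) (t : R)) (s • y) from
        (tm_smulS Sub Y _ _ _).trans (congrArg (fun w : S => tm Sub Y w (s • y)) (mul_one _))]
    rw [mul_comm ((algebraMap R S) (t : R)) s, hat]
    rw [h1, h1, sub_eq_zero]
    congr 1
    rw [← mul_smul, mul_comm, hat]
  rw [← sub_eq_zero]
  exact (hu.smul_eq_zero).mp hz

/-- the inverse of the counit, as a plain linear map -/
noncomputable def counitInv (Y : ModuleCat.{u} S) :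
    Y ⟶ (ModuleCat.extendScalars floc).obj ((ModuleCat.restrictScalars floc).obj Y) :=
  ModuleCat.ofHom (X := Y)
    (Y := (ModuleCat.extendScalars floc).obj ((ModuleCat.restrictScalars floc).obj Y)) {
  toFun := fun y => tm Sub Y (oneS Sub) y
  map_add' := fun y y' => tm_add Sub Y _ y y'
  map_smul' := fun s y => by
    simp only [RingHom.id_apply]
    refine (key_tmul Sub Y s y).symm.trans ?_
    exact (congrArg (fun w : S => tm Sub Y w y) (mul_one s)).symm.trans
      (tm_smulS Sub Y s (oneS Sub) y).symm }

noncomputable def counitIso (Y : ModuleCat.{u} S) :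
    (ModuleCat.extendScalars floc).obj ((ModuleCat.restrictScalars floc).obj Y) ≅ Y where
  hom := (ModuleCat.ExtendRestrictScalarsAdj.counit floc).app Y
  inv := counitInv Sub Y
  hom_inv_id := by
    ext y
    exact congrArg (counitInv Sub Y).hom
      (ModuleCat.ExtendRestrictScalarsAdj.Counit.map_apply_one_tmul floc y)
  inv_hom_id := by
    ext y
    exact ModuleCat.ExtendRestrictScalarsAdj.Counit.map_apply_one_tmul floc y

end gldhAux

namespace gldhAux

/-- localize a projective resolution -/
noncomputable def localizedResolution (M : ModuleCat.{u} S)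
    (P : ProjectiveResolution ((ModuleCat.restrictScalars floc).obj M)) :
    ProjectiveResolution M where
  complex := ((ModuleCat.extendScalars floc).mapHomologicalComplex _).obj P.complex
  projective n := (ModuleCat.extendRestrictScalarsAdj floc).map_projective _ (P.projective n)
  π := ((ModuleCat.extendScalars floc).mapHomologicalComplex _).map P.π ≫
    (HomologicalComplex.singleMapHomologicalComplex (ModuleCat.extendScalars floc) _ 0).hom.app _ ≫
    (ChainComplex.single₀ _).map (counitIso Sub M).hom

end gldhAux

set_option maxHeartbeats 1000000 in
lemma gldhAux.isZero_Ext (n : ℕ)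
    (hA : ∀ (q : ℕ), n < q → ∀ (M N : ModuleCat.{u} R),
      IsZero (((Ext R (ModuleCat.{u} R) q).obj (Opposite.op M)).obj N))
    (q : ℕ) (hq : n < q) (M N : ModuleCat.{u} S) :
    IsZero (((Ext S (ModuleCat.{u} S) q).obj (Opposite.op M)).obj N) := by
  obtain ⟨j, rfl⟩ : ∃ j, q = j + 1 := ⟨q - 1, by omega⟩
  set G := ModuleCat.restrictScalars.{u,u,u} floc with hG
  obtain ⟨P⟩ := (inferInstance : HasProjectiveResolution (G.obj M)).out
  let P' : ProjectiveResolution M := gldhAux.localizedResolution Sub M P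
  refine IsZero.of_iso ?_ (P'.isoExt (j+1) N)
  rw [← HomologicalComplex.exactAt_iff_isZero_homology]
  have hAex : (P.complex.linearYonedaObj R (G.obj N)).ExactAt (j+1) := by
    rw [HomologicalComplex.exactAt_iff_isZero_homology]
    exact IsZero.of_iso (hA (j+1) hq (G.obj M) (G.obj N)) (P.isoExt (j+1) (G.obj N)).symm
  rw [HomologicalComplex.exactAt_iff' _ j (j+1) (j+2) (by simp) (by simp)] at hAex ⊢
  rw [ShortComplex.moduleCat_exact_iff] at hAex ⊢
  intro g hg
  obtain ⟨g, rfl⟩ : ∃ g' : (ModuleCat.extendScalars.{u,u,u} floc).obj (P.complex.X (j+1)) ⟶ N,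
    g' = g := ⟨g, rfl⟩
  set adj := ModuleCat.extendRestrictScalarsAdj.{u,u,u} floc with hadj
  have hg0 : (ModuleCat.extendScalars.{u,u,u} floc).map (P.complex.d (j+2) (j+1)) ≫ g = 0 := hg
  have hgA : P.complex.d (j+2) (j+1) ≫ (adj.homEquiv (P.complex.X (j+1)) N g) = 0 := by
    rw [← Adjunction.homEquiv_naturality_left, hg0, Adjunction.homEquiv_unit]
    simp
  obtain ⟨h, hh⟩ := hAex (adj.homEquiv (P.complex.X (j+1)) N g) hgA
  obtain ⟨h, rfl⟩ : ∃ h' : P.complex.X j ⟶ G.obj N, h' = h := ⟨h, rfl⟩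
  refine ⟨(adj.homEquiv (P.complex.X j) N).symm h, ?_⟩
  apply (adj.homEquiv (P.complex.X (j+1)) N).injective
  rw [show ((HomologicalComplex.sc'
        (P'.complex.linearYonedaObj S N) j (j+1) (j+2)).f
        ((adj.homEquiv (P.complex.X j) N).symm h))
      = (ModuleCat.extendScalars.{u,u,u} floc).map (P.complex.d (j+1) j) ≫
        ((adj.homEquiv (P.complex.X j) N).symm h) from rfl]
  rw [Adjunction.homEquiv_naturality_left, Equiv.apply_symm_apply]
  exact hh

end Loc


theorem gldh_localization_finite
    (A : Type u) [CommRing A] [IsNoetherianRing A] [IsLocalRing A]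
    (hgl : gldh A ≠ ⊤) (p : Ideal A) [p.IsPrime] :
    gldh (Localization.AtPrime p) ≠ ⊤ := by
  obtain ⟨m, hm⟩ : ∃ m : ℕ, gldh A = (m : ℕ∞) := by
    obtain ⟨b, hb⟩ := WithTop.ne_top_iff_exists.mp hgl
    exact ⟨b, hb.symm⟩
  have hA : ∀ q : ℕ, m < q → ∀ M N : ModuleCat.{u} A,
      IsZero (((Ext A (ModuleCat.{u} A) q).obj (Opposite.op M)).obj N) := by
    intro q hq M N
    by_contra hne
    have hmem : (q : ℕ∞) ∈ {n : ℕ∞ | ∃ (p : ℕ) (M N : ModuleCat.{u} A),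
        n = (p : ℕ∞) ∧ ¬ IsZero (((Ext A (ModuleCat.{u} A) p).obj (Opposite.op M)).obj N)} :=
      ⟨q, M, N, rfl, hne⟩
    have hle : (q : ℕ∞) ≤ gldh A := le_sSup hmem
    rw [hm, Nat.cast_le] at hle
    omega
  have hS := gldhAux.isZero_Ext p.primeCompl m hA
  have hbound : gldh (Localization.AtPrime p) ≤ (m : ℕ∞) := by
    apply sSup_le
    rintro b ⟨q, M, N, rfl, hne⟩
    rw [Nat.cast_le]
    by_contra hgt
    exact hne (hS q (by omega) M N)
  exact ne_top_of_le_ne_top (WithTop.coe_ne_top) hbound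
end
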